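/- Loday–Ronco interval formula: for permutations a ∈ S_p and b ∈ S_q, the shifted shuffle product satisfies a ⊔̄ b = Σ_{a□b ≤ σ ≤ b△a} σ, the sum of all permutations σ ∈ S_{p+q} in the interval [a □ b, b △ a] of the right weak order. -/

import Mathlib

/-- Standardization (0-based): replace each letter by its rank among the letters of `w`. -/
def stW (w : List ℕ) : List ℕ := w.map (fun x => (w.filter (· < x)).length)

/-- `w` is the one-line word of a permutation of `{0, …, n-1}` where `n = w.length`. -/
def IsPermWord (w : List ℕ) : Prop := w.Perm (List.range w.length)

/-- The inversion set of a word: pairs `(j, i)` with `j > i` and `j` to the left of `i`. -/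
def invSet (w : List ℕ) : Set (ℕ × ℕ) :=
  {p | p.2 < p.1 ∧ ∃ k l : ℕ, k < l ∧ w[k]? = some p.1 ∧ w[l]? = some p.2}

/-- The right weak order: inclusion of inversion sets. -/
def weakLe (u v : List ℕ) : Prop := invSet u ⊆ invSet v

/-- Left shifted concatenation `v △ u`: the word `v̄ u`, `v̄` being `v` shifted by `|u|`. -/
def triangle (v u : List ℕ) : List ℕ := v.map (· + u.length) ++ u

/-- Right shifted concatenation `u □ v`: the word `u v̄`, `v̄` being `v` shifted by `|u|`. -/
def squareC (u v : List ℕ) : List ℕ := u ++ v.map (· + u.length)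

/-- The list of all shuffles of two words. -/
def shuffles : List ℕ → List ℕ → List (List ℕ)
  | [], v => [v]
  | u, [] => [u]
  | a :: u, b :: v =>
      (shuffles u (b :: v)).map (a :: ·) ++ (shuffles (a :: u) v).map (b :: ·)
termination_by u v => u.length + v.length

section Auxiliary
open List

lemma pair_sublist_iff {x y : ℕ} {w : List ℕ} :
    [x, y] <+ w ↔ ∃ k l : ℕ, k < l ∧ w[k]? = some x ∧ w[l]? = some y := by
  constructor
  · intro h
    induction w with
    | nil => simp at h
    | cons c w ih =>
      cases h with
      | cons _ h =>
        obtain ⟨k, l, hkl, hk, hl⟩ := ih h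
        exact ⟨k + 1, l + 1, by omega, by simpa using hk, by simpa using hl⟩
      | cons_cons _ h =>
        obtain ⟨m, hm⟩ := List.mem_iff_getElem?.mp (List.singleton_sublist.mp h)
        exact ⟨0, m + 1, by omega, by simp, by simpa using hm⟩
  · rintro ⟨k, l, hkl, hk, hl⟩
    induction w generalizing k l with
    | nil => simp at hk
    | cons c w ih =>
      cases k with
      | zero =>
        simp at hk; subst hk
        obtain ⟨l', rfl⟩ : ∃ l', l = l' + 1 := ⟨l - 1, by omega⟩
        simp only [List.getElem?_cons_succ] at hl
        exact (List.singleton_sublist.mpr (List.mem_iff_getElem?.mpr ⟨l', hl⟩)).cons₂ c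
      | succ k' =>
        obtain ⟨l', rfl⟩ : ∃ l', l = l' + 1 := ⟨l - 1, by omega⟩
        simp only [List.getElem?_cons_succ] at hk hl
        exact (ih k' l' (by omega) hk hl).cons c

lemma mem_invSet {x y : ℕ} {w : List ℕ} :
    (x, y) ∈ invSet w ↔ y < x ∧ [x, y] <+ w := by
  simp [invSet, pair_sublist_iff]

lemma pair_sublist_filter {x y : ℕ} {w : List ℕ} {P : ℕ → Bool}
    (h : [x, y] <+ w) (hx : P x) (hy : P y) : [x, y] <+ w.filter P := by
  have := h.filter P
  simpa [hx, hy] using this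

lemma pair_sublist_append {x y : ℕ} {u v : List ℕ} :
    [x, y] <+ u ++ v ↔ [x, y] <+ u ∨ [x, y] <+ v ∨ (x ∈ u ∧ y ∈ v) := by
  rw [List.sublist_append_iff]
  constructor
  · rintro ⟨l₁, l₂, he, h1, h2⟩
    rcases l₁ with _ | ⟨c, _ | ⟨d, l⟩⟩
    · exact Or.inr (Or.inl (he ▸ h2))
    · simp only [List.cons_append, List.nil_append, List.cons.injEq] at he
      obtain ⟨rfl, rfl⟩ := he
      exact Or.inr (Or.inr ⟨List.singleton_sublist.mp h1,
        List.singleton_sublist.mp ((List.singleton_sublist.mpr (List.mem_cons_self (a := y) (l := _))).trans h2)⟩)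
    · simp only [List.cons_append, List.cons.injEq] at he
      obtain ⟨rfl, rfl, he⟩ := he
      obtain ⟨rfl, rfl⟩ := List.append_eq_nil_iff.mp he.symm
      exact Or.inl h1
  · rintro (h | h | ⟨hx, hy⟩)
    · exact ⟨[x, y], [], by simp, h, by simp⟩
    · exact ⟨[], [x, y], by simp, by simp, h⟩
    · exact ⟨[x], [y], by simp, List.singleton_sublist.mpr hx, List.singleton_sublist.mpr hy⟩

lemma eq_of_invSet_eq : ∀ {u v : List ℕ}, u.Perm v → u.Nodup →
    invSet u = invSet v → u = v := by
  intro u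
  induction u with
  | nil => intro v hp _ _; exact (hp.nil_eq).symm ▸ rfl
  | cons x u' ih =>
    intro v hp hnd hinv
    have hndv : v.Nodup := hp.nodup_iff.mp hnd
    cases v with
    | nil => exact absurd hp.length_eq (by simp)
    | cons c v' =>
      have hxu' : x ∉ u' := (List.nodup_cons.mp hnd).1
      have hcv' : c ∉ v' := (List.nodup_cons.mp hndv).1
      have hxc : x = c := by
        by_contra hne
        have hxv : x ∈ c :: v' := hp.mem_iff.mp (List.mem_cons_self (a := x) (l := u'))
        have hcu : c ∈ x :: u' := hp.mem_iff.mpr (List.mem_cons_self (a := c) (l := v'))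
        have hxv' : x ∈ v' := by rcases List.mem_cons.mp hxv with h | h; exact absurd h hne; exact h
        have hcu' : c ∈ u' := by
          rcases List.mem_cons.mp hcu with h | h; exact absurd h.symm hne; exact h
        rcases Nat.lt_or_ge c x with hlt | hge
        · have h1 : (x, c) ∈ invSet (x :: u') :=
            mem_invSet.mpr ⟨hlt, (List.singleton_sublist.mpr hcu').cons₂ x⟩
          have h2 := (mem_invSet.mp (hinv ▸ h1)).2
          cases h2 with
          | cons _ h => exact hcv' (h.subset (by simp))
          | cons_cons _ h => exact hne rfl
        · have hlt : x < c := by omega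
          have h1 : (c, x) ∈ invSet (c :: v') :=
            mem_invSet.mpr ⟨hlt, (List.singleton_sublist.mpr hxv').cons₂ c⟩
          have h2 := (mem_invSet.mp (hinv ▸ h1 : (c, x) ∈ invSet (x :: u'))).2
          cases h2 with
          | cons _ h => exact hxu' (h.subset (by simp))
          | cons_cons _ h => exact hne rfl
      subst hxc
      have hp' : u'.Perm v' := hp.cons_inv
      have hinv' : invSet u' = invSet v' := by
        ext ⟨j, i⟩
        simp only [mem_invSet]
        constructor
        · rintro ⟨hij, hs⟩
          refine ⟨hij, ?_⟩
          have h1 : (j, i) ∈ invSet (x :: u') := mem_invSet.mpr ⟨hij, hs.cons x⟩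
          have h2 := (mem_invSet.mp (hinv ▸ h1)).2
          cases h2 with
          | cons _ h => exact h
          | cons_cons _ h => exact absurd (hs.subset (by simp)) hxu'
        · rintro ⟨hij, hs⟩
          refine ⟨hij, ?_⟩
          have h1 : (j, i) ∈ invSet (x :: v') := mem_invSet.mpr ⟨hij, hs.cons x⟩
          have h2 := (mem_invSet.mp (hinv ▸ h1 : (j, i) ∈ invSet (x :: u'))).2
          cases h2 with
          | cons _ h => exact h
          | cons_cons _ h => exact absurd (hs.subset (by simp)) hcv'
      rw [ih hp' (List.nodup_cons.mp hnd).2 hinv']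

lemma shuffles_nil_left (v : List ℕ) : shuffles [] v = [v] := by rw [shuffles]
lemma shuffles_nil_right (u : List ℕ) : shuffles u [] = [u] := by
  cases u with
  | nil => rw [shuffles]
  | cons a u => rw [shuffles]; simp
lemma shuffles_cons_cons (a b : ℕ) (u v : List ℕ) :
    shuffles (a :: u) (b :: v) =
      (shuffles u (b :: v)).map (a :: ·) ++ (shuffles (a :: u) v).map (b :: ·) := by
  rw [shuffles]

lemma cons_left_mem_shuffles {u v τ : List ℕ} {c : ℕ} (h : τ ∈ shuffles u v) :
    c :: τ ∈ shuffles (c :: u) v := by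
  cases v with
  | nil =>
    rw [shuffles_nil_right] at h ⊢
    simp at h; subst h; simp
  | cons b v' =>
    rw [shuffles_cons_cons]
    exact List.mem_append_left _ (List.mem_map_of_mem h)

lemma cons_right_mem_shuffles {u v τ : List ℕ} {c : ℕ} (h : τ ∈ shuffles u v) :
    c :: τ ∈ shuffles u (c :: v) := by
  cases u with
  | nil =>
    rw [shuffles_nil_left] at h ⊢
    simp at h; subst h; simp
  | cons a u' =>
    rw [shuffles_cons_cons]
    exact List.mem_append_right _ (List.mem_map_of_mem h)

lemma filter_of_mem_shuffles {P : ℕ → Bool} :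
    ∀ u v : List ℕ, (∀ x ∈ u, P x = true) → (∀ x ∈ v, P x = false) →
    ∀ σ ∈ shuffles u v, σ.filter P = u ∧ σ.filter (fun x => !P x) = v := by
  intro u v
  induction u, v using shuffles.induct with
  | case1 v =>
    intro _ hv σ hσ
    rw [shuffles_nil_left] at hσ; simp at hσ; subst hσ
    constructor
    · exact List.filter_eq_nil_iff.mpr (by intro x hx; simp [hv x hx])
    · exact List.filter_eq_self.mpr (by intro x hx; simp [hv x hx])
  | case2 u _ =>
    intro hu _ σ hσ
    rw [shuffles_nil_right] at hσ; simp at hσ; subst hσ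
    constructor
    · exact List.filter_eq_self.mpr hu
    · exact List.filter_eq_nil_iff.mpr (by intro x hx; simp [hu x hx])
  | case3 a u b v ih1 ih2 =>
    intro hu hv σ hσ
    rw [shuffles_cons_cons] at hσ
    rcases List.mem_append.mp hσ with h | h
    · obtain ⟨τ, hτ, rfl⟩ := List.mem_map.mp h
      obtain ⟨h1, h2⟩ := ih1 (fun x hx => hu x (List.mem_cons_of_mem a hx)) hv τ hτ
      have hPa : P a = true := hu a (List.mem_cons_self (a := a) (l := u))
      constructor
      · simp [List.filter_cons, hPa, h1]
      · simp [List.filter_cons, hPa, h2]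
    · obtain ⟨τ, hτ, rfl⟩ := List.mem_map.mp h
      obtain ⟨h1, h2⟩ := ih2 hu (fun x hx => hv x (List.mem_cons_of_mem b hx)) τ hτ
      have hPb : P b = false := hv b (List.mem_cons_self (a := b) (l := v))
      constructor
      · simp [List.filter_cons, hPb, h1]
      · simp [List.filter_cons, hPb, h2]

lemma mem_shuffles_of_filter {P : ℕ → Bool} :
    ∀ σ u v : List ℕ, σ.filter P = u → σ.filter (fun x => !P x) = v →
    σ ∈ shuffles u v := by
  intro σ
  induction σ with
  | nil =>
    intro u v hu hv
    simp at hu hv; subst hu; subst hv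
    rw [shuffles_nil_left]; simp
  | cons c τ ih =>
    intro u v hu hv
    cases hc : P c with
    | true =>
      rw [List.filter_cons, if_pos (by simp [hc])] at hu
      rw [List.filter_cons, if_neg (by simp [hc])] at hv
      subst hu; subst hv
      exact cons_left_mem_shuffles (ih _ _ rfl rfl)
    | false =>
      rw [List.filter_cons, if_neg (by simp [hc])] at hu
      rw [List.filter_cons, if_pos (by simp [hc])] at hv
      subst hu; subst hv
      exact cons_right_mem_shuffles (ih _ _ rfl rfl)

lemma shuffles_nodup {P : ℕ → Bool} :
    ∀ u v : List ℕ, (∀ x ∈ u, P x = true) → (∀ x ∈ v, P x = false) →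
    (shuffles u v).Nodup := by
  intro u v
  induction u, v using shuffles.induct with
  | case1 v => intro _ _; rw [shuffles_nil_left]; simp
  | case2 u _ => intro _ _; rw [shuffles_nil_right]; simp
  | case3 a u b v ih1 ih2 =>
    intro hu hv
    rw [shuffles_cons_cons]
    have hab : a ≠ b := by
      intro h
      have h1 := hu a (List.mem_cons_self (a := a) (l := u))
      have h2 := hv b (List.mem_cons_self (a := b) (l := v))
      rw [h, h2] at h1; exact Bool.false_ne_true h1
    refine List.Nodup.append ?_ ?_ ?_
    · exact (ih1 (fun x hx => hu x (List.mem_cons_of_mem a hx)) hv).map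
        (fun x y h => by simpa using h)
    · exact (ih2 hu (fun x hx => hv x (List.mem_cons_of_mem b hx))).map
        (fun x y h => by simpa using h)
    · intro s hs1 hs2
      obtain ⟨τ, _, rfl⟩ := List.mem_map.mp hs1
      obtain ⟨ρ, _, he⟩ := List.mem_map.mp hs2
      simp only [List.cons.injEq] at he
      exact hab he.1.symm

lemma mem_shuffles_iff_interval {p q : ℕ} {a b σ : List ℕ}
    (ha : a.Perm (List.range p)) (hb : b.Perm (List.range q)) :
    σ ∈ shuffles a (b.map (· + p)) ↔
      σ.Perm (List.range (p + q)) ∧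
        weakLe (a ++ b.map (· + p)) σ ∧ weakLe σ (b.map (· + p) ++ a) := by
  set b' : List ℕ := b.map (· + p) with hb'def
  set P : ℕ → Bool := fun x => decide (x < p) with hPdef
  have hamem : ∀ x ∈ a, x < p := fun x hx => List.mem_range.mp (ha.subset hx)
  have hbmem : ∀ x ∈ b', p ≤ x := by
    intro x hx
    obtain ⟨y, _, rfl⟩ := List.mem_map.mp hx
    omega
  have hPa : ∀ x ∈ a, P x = true := fun x hx => by simp [hPdef, hamem x hx]
  have hPb : ∀ x ∈ b', P x = false := fun x hx => by
    simp only [hPdef, decide_eq_false_iff_not, not_lt]; exact hbmem x hx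
  have hrange : List.range (p + q) = List.range p ++ (List.range q).map (· + p) := by
    rw [List.range_add]
    congr 1
    exact List.map_congr_left (fun x _ => Nat.add_comm p x)
  have hb'p : b'.Perm ((List.range q).map (· + p)) := hb.map _
  have hR : (a ++ b').Perm (List.range (p + q)) := by
    rw [hrange]; exact ha.append hb'p
  constructor
  · intro h
    obtain ⟨hfa, hfb⟩ := filter_of_mem_shuffles a b' hPa hPb σ h
    have h1 : (a ++ b').Perm σ := by
      rw [← hfa, ← hfb]; exact List.filter_append_perm P σ
    refine ⟨h1.symm.trans hR, ?_, ?_⟩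
    · rintro ⟨j, i⟩ hm
      rw [mem_invSet] at hm ⊢
      obtain ⟨hij, hs⟩ := hm
      refine ⟨hij, ?_⟩
      rcases pair_sublist_append.mp hs with h' | h' | ⟨hj, hi⟩
      · rw [← hfa] at h'
        exact h'.trans (List.filter_sublist (l := σ))
      · rw [← hfb] at h'
        exact h'.trans (List.filter_sublist (l := σ))
      · exact absurd hij (by have := hamem j hj; have := hbmem i hi; omega)
    · rintro ⟨j, i⟩ hm
      rw [mem_invSet] at hm ⊢
      obtain ⟨hij, hs⟩ := hm
      refine ⟨hij, ?_⟩
      have hjσ : j ∈ σ := hs.subset (by simp)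
      have hiσ : i ∈ σ := hs.subset (by simp)
      have hjab : j ∈ a ++ b' := h1.mem_iff.mpr hjσ
      have hiab : i ∈ a ++ b' := h1.mem_iff.mpr hiσ
      by_cases hjp : j < p
      · have hip : i < p := by omega
        have : [j, i] <+ σ.filter P :=
          pair_sublist_filter hs (by simp [hPdef, hjp]) (by simp [hPdef, hip])
        rw [hfa] at this
        exact this.trans (List.sublist_append_right b' a)
      · by_cases hip : i < p
        · have hj : j ∈ b' := by
            rcases List.mem_append.mp hjab with h' | h'
            · exact absurd (hamem j h') hjp
            · exact h'
          have hi : i ∈ a := by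
            rcases List.mem_append.mp hiab with h' | h'
            · exact h'
            · exact absurd (hbmem i h') (by omega)
          exact pair_sublist_append.mpr (Or.inr (Or.inr ⟨hj, hi⟩))
        · have : [j, i] <+ σ.filter (fun x => !P x) :=
            pair_sublist_filter hs (by simp [hPdef, hjp]) (by simp [hPdef, hip])
          rw [hfb] at this
          exact this.trans (List.sublist_append_left b' a)
  · rintro ⟨hσR, h1, h2⟩
    have hnd : σ.Nodup := hσR.nodup_iff.mpr (List.nodup_range)
    have hfilt1 : (List.range (p + q)).filter P = List.range p := by
      rw [hrange, List.filter_append]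
      rw [List.filter_eq_self.mpr (fun x hx => by simp [hPdef, List.mem_range.mp hx])]
      rw [List.filter_eq_nil_iff.mpr (fun x hx => by
        obtain ⟨y, _, rfl⟩ := List.mem_map.mp hx
        simp [hPdef])]
      simp
    have hfilt2 : (List.range (p + q)).filter (fun x => !P x) =
        (List.range q).map (· + p) := by
      rw [hrange, List.filter_append]
      rw [List.filter_eq_nil_iff.mpr (fun x hx => by
        simp [hPdef, List.mem_range.mp hx])]
      rw [List.filter_eq_self.mpr (fun x hx => by
        obtain ⟨y, _, rfl⟩ := List.mem_map.mp hx
        simp [hPdef])]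
      simp
    have hsp : (σ.filter P).Perm a := ((hσR.filter P).trans (hfilt1 ▸ List.Perm.refl _)).trans ha.symm
    have htp : (σ.filter (fun x => !P x)).Perm b' :=
      ((hσR.filter _).trans (hfilt2 ▸ List.Perm.refl _)).trans hb'p.symm
    -- letters of the filtered words
    have hsmem : ∀ x ∈ σ.filter P, x < p := by
      intro x hx
      have := (List.mem_filter.mp hx).2
      simpa [hPdef] using this
    have htmem : ∀ x ∈ σ.filter (fun x => !P x), p ≤ x := by
      intro x hx
      have := (List.mem_filter.mp hx).2
      simpa [hPdef] using this
    have hinv_s : invSet (σ.filter P) = invSet a := by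
      ext ⟨j, i⟩
      simp only [mem_invSet]
      constructor
      · rintro ⟨hij, hs⟩
        refine ⟨hij, ?_⟩
        have hjp : j < p := hsmem j (hs.subset (by simp))
        have hip : i < p := hsmem i (hs.subset (by simp))
        have hmσ : (j, i) ∈ invSet σ :=
          mem_invSet.mpr ⟨hij, hs.trans (List.filter_sublist (l := σ))⟩
        have := (mem_invSet.mp (h2 hmσ)).2
        rcases pair_sublist_append.mp this with h' | h' | ⟨hj, hi⟩
        · exact absurd (hbmem j (h'.subset (by simp))) (by omega)
        · exact h'
        · exact absurd (hbmem j hj) (by omega)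
      · rintro ⟨hij, hs⟩
        refine ⟨hij, ?_⟩
        have hjp : j < p := hamem j (hs.subset (by simp))
        have hip : i < p := hamem i (hs.subset (by simp))
        have hmab : (j, i) ∈ invSet (a ++ b') :=
          mem_invSet.mpr ⟨hij, hs.trans (List.sublist_append_left a b')⟩
        have hmσ := (mem_invSet.mp (h1 hmab)).2
        exact pair_sublist_filter hmσ (by simp [hPdef, hjp]) (by simp [hPdef, hip])
    have hinv_t : invSet (σ.filter (fun x => !P x)) = invSet b' := by
      ext ⟨j, i⟩
      simp only [mem_invSet]
      constructor
      · rintro ⟨hij, hs⟩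
        refine ⟨hij, ?_⟩
        have hjp : p ≤ j := htmem j (hs.subset (by simp))
        have hip : p ≤ i := htmem i (hs.subset (by simp))
        have hmσ : (j, i) ∈ invSet σ :=
          mem_invSet.mpr ⟨hij, hs.trans (List.filter_sublist (l := σ))⟩
        have := (mem_invSet.mp (h2 hmσ)).2
        rcases pair_sublist_append.mp this with h' | h' | ⟨hj, hi⟩
        · exact h'
        · exact absurd (hamem j (h'.subset (by simp))) (by omega)
        · exact absurd (hamem i hi) (by omega)
      · rintro ⟨hij, hs⟩
        refine ⟨hij, ?_⟩
        have hjp : p ≤ j := hbmem j (hs.subset (by simp))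
        have hip : p ≤ i := hbmem i (hs.subset (by simp))
        have hmab : (j, i) ∈ invSet (a ++ b') :=
          mem_invSet.mpr ⟨hij, hs.trans (List.sublist_append_right a b')⟩
        have hmσ := (mem_invSet.mp (h1 hmab)).2
        exact pair_sublist_filter hmσ (by simp [hPdef]; omega) (by simp [hPdef]; omega)
    have hs_eq : σ.filter P = a :=
      eq_of_invSet_eq hsp (List.Nodup.sublist (List.filter_sublist (l := σ)) hnd) hinv_s
    have ht_eq : σ.filter (fun x => !P x) = b' :=
      eq_of_invSet_eq htp (List.Nodup.sublist (List.filter_sublist (l := σ)) hnd) hinv_t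
    exact mem_shuffles_of_filter σ a b' hs_eq ht_eq

end Auxiliary

open scoped Classical in
/-- **Loday–Ronco.** For `a ∈ S_p`, `b ∈ S_q`, the shifted shuffle
`a ⊔̄ b` (the sum of all shuffles of `a` and `b̄`) is the sum of all permutations in
the interval `[a □ b, b △ a]` of the right weak order. -/
theorem loday_ronco_interval (p q : ℕ) (a b : List ℕ)
    (ha : IsPermWord a) (hb : IsPermWord b)
    (hap : a.length = p) (hbq : b.length = q) :
    ((shuffles a (b.map (· + p))).map
        (fun σ => Finsupp.single σ (1 : ℤ))).sum =
      ∑ σ ∈ (((List.range (p + q)).permutations.toFinset).filter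
          (fun σ => weakLe (squareC a b) σ ∧ weakLe σ (triangle b a))),
        Finsupp.single σ (1 : ℤ) := by
  have ha' : a.Perm (List.range p) := hap ▸ ha
  have hb' : b.Perm (List.range q) := hbq ▸ hb
  have hamem : ∀ x ∈ a, x < p := fun x hx => List.mem_range.mp (ha'.subset hx)
  have hnd : (shuffles a (b.map (· + p))).Nodup := by
    refine shuffles_nodup (P := fun x => decide (x < p)) a _ ?_ ?_
    · intro x hx; simp [hamem x hx]
    · intro x hx
      obtain ⟨y, _, rfl⟩ := List.mem_map.mp hx
      simp
  rw [← List.sum_toFinset _ hnd]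
  congr 1
  ext σ
  simp only [List.mem_toFinset, Finset.mem_filter, List.mem_permutations]
  rw [mem_shuffles_iff_interval ha' hb']
  have h1 : squareC a b = a ++ b.map (· + p) := by rw [squareC, hap]
  have h2 : triangle b a = b.map (· + p) ++ a := by rw [triangle, hap]
  rw [h1, h2]
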